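/- For every natural number n ≥ 1, the polar symmetric grid A_n = {(r_i cos θ_j, r_i sin θ_j) : r_i = cos(iπ/n), 0 ≤ i ≤ n; θ_j = jπ/(n+1), 0 ≤ j ≤ n} in the closed unit disk has cardinality (n+1)² when n is odd and cardinality n² + n + 1 when n is even. -/

import Mathlib

open Real Finset

/-- The polar symmetric grid of degree `n` for the closed unit disk:
`A_n = {(r_i cos θ_j, r_i sin θ_j)}` with `r_i = cos(iπ/n)`, `0 ≤ i ≤ n`, and
`θ_j = jπ/(n+1)`, `0 ≤ j ≤ n` (coincident points counted once). -/
noncomputable def polarGrid (n : ℕ) : Finset (ℝ × ℝ) :=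
  (Finset.range (n + 1) ×ˢ Finset.range (n + 1)).image
    (fun ij : ℕ × ℕ =>
      (Real.cos (ij.1 * Real.pi / n) * Real.cos (ij.2 * Real.pi / (n + 1)),
        Real.cos (ij.1 * Real.pi / n) * Real.sin (ij.2 * Real.pi / (n + 1))))

namespace PolarGridAux

lemma radius_arg_mem {n i : ℕ} (hn : 1 ≤ n) (hi : i ≤ n) :
    (i : ℝ) * π / n ∈ Set.Icc 0 π := by
  have hπ := Real.pi_pos
  have hn0 : (0:ℝ) < n := by exact_mod_cast hn
  constructor
  · positivity
  · rw [div_le_iff₀ hn0]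
    have : (i:ℝ) ≤ n := by exact_mod_cast hi
    nlinarith

lemma angle_arg_mem {n j : ℕ} (hj : j ≤ n) :
    (j : ℝ) * π / (n + 1) ∈ Set.Ico 0 π := by
  have hπ := Real.pi_pos
  have hn0 : (0:ℝ) < n + 1 := by positivity
  constructor
  · positivity
  · rw [div_lt_iff₀ hn0]
    have : (j:ℝ) < n + 1 := by exact_mod_cast Nat.lt_succ_of_le hj
    nlinarith

lemma radius_inj {n i i' : ℕ} (hn : 1 ≤ n) (hi : i ≤ n) (hi' : i' ≤ n)
    (h : Real.cos ((i : ℝ) * π / n) = Real.cos ((i' : ℝ) * π / n)) : i = i' := by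
  have hn0 : (n:ℝ) ≠ 0 := by exact_mod_cast Nat.one_le_iff_ne_zero.mp hn
  have := Real.injOn_cos (radius_arg_mem hn hi) (radius_arg_mem hn hi') h
  have hπ := Real.pi_ne_zero
  field_simp at this
  exact_mod_cast this

lemma angle_inj {n j j' : ℕ} (hj : j ≤ n) (hj' : j' ≤ n)
    (h : (j : ℝ) * π / (n + 1) = (j' : ℝ) * π / (n + 1)) : j = j' := by
  have hπ := Real.pi_ne_zero
  have hn0 : ((n:ℝ) + 1) ≠ 0 := by positivity
  field_simp at h
  exact_mod_cast h

lemma radius_eq_zero_iff {n i : ℕ} (hn : 1 ≤ n) (hi : i ≤ n) :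
    Real.cos ((i : ℝ) * π / n) = 0 ↔ 2 * i = n := by
  have hn0 : (n:ℝ) ≠ 0 := by exact_mod_cast Nat.one_le_iff_ne_zero.mp hn
  have hπ := Real.pi_ne_zero
  constructor
  · intro h
    have h2 : Real.cos ((i : ℝ) * π / n) = Real.cos (π / 2) := by
      rw [h, Real.cos_pi_div_two]
    have hmem : π / 2 ∈ Set.Icc 0 π := by
      constructor <;> nlinarith [Real.pi_pos]
    have := Real.injOn_cos (radius_arg_mem hn hi) hmem h2
    field_simp at this
    have h3 : π * (2 * (i:ℝ)) = π * n := by rw [← this]; ring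
    have h4 : 2 * (i:ℝ) = n := mul_left_cancel₀ hπ h3
    exact_mod_cast h4
  · intro h
    have : (i : ℝ) * π / n = π / 2 := by
      have h' : (2:ℝ) * i = n := by exact_mod_cast h
      have hi0 : (i:ℝ) ≠ 0 := by
        have : 1 ≤ i := by omega
        exact_mod_cast Nat.one_le_iff_ne_zero.mp this
      rw [← h']
      field_simp
    rw [this, Real.cos_pi_div_two]

/-- key injectivity away from zero radius -/
lemma key {n i j i' j' : ℕ} (hn : 1 ≤ n) (hi : i ≤ n) (hj : j ≤ n) (hi' : i' ≤ n) (hj' : j' ≤ n)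
    (hr : Real.cos ((i : ℝ) * π / n) ≠ 0)
    (h1 : Real.cos ((i:ℝ) * π / n) * Real.cos ((j:ℝ) * π / (n + 1))
        = Real.cos ((i':ℝ) * π / n) * Real.cos ((j':ℝ) * π / (n + 1)))
    (h2 : Real.cos ((i:ℝ) * π / n) * Real.sin ((j:ℝ) * π / (n + 1))
        = Real.cos ((i':ℝ) * π / n) * Real.sin ((j':ℝ) * π / (n + 1))) :
    i = i' ∧ j = j' := by
  set r := Real.cos ((i:ℝ) * π / n) with hrdef
  set r' := Real.cos ((i':ℝ) * π / n) with hr'def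
  set c := Real.cos ((j:ℝ) * π / (n + 1))
  set s := Real.sin ((j:ℝ) * π / (n + 1))
  set c' := Real.cos ((j':ℝ) * π / (n + 1))
  set s' := Real.sin ((j':ℝ) * π / (n + 1))
  have hcs : s ^ 2 + c ^ 2 = 1 := Real.sin_sq_add_cos_sq _
  have hcs' : s' ^ 2 + c' ^ 2 = 1 := Real.sin_sq_add_cos_sq _
  have h1sq : (r * c) ^ 2 = (r' * c') ^ 2 := by rw [h1]
  have h2sq : (r * s) ^ 2 = (r' * s') ^ 2 := by rw [h2]
  have hsq : r ^ 2 = r' ^ 2 := by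
    have e : r ^ 2 * (s ^ 2 + c ^ 2) = r' ^ 2 * (s' ^ 2 + c' ^ 2) := by
      linear_combination h1sq + h2sq
    rw [hcs, hcs', mul_one, mul_one] at e; exact e
  have hfac : (r - r') * (r + r') = 0 := by linear_combination hsq
  rcases mul_eq_zero.mp hfac with hcase | hcase
  · -- r = r'
    have hrr : r = r' := by linarith
    have hc : c = c' := by
      have := h1; rw [← hrr] at this; exact mul_left_cancel₀ hr this
    have hmemj := angle_arg_mem (n := n) hj
    have hmemj' := angle_arg_mem (n := n) hj'
    have hθ := Real.injOn_cos (Set.Ico_subset_Icc_self hmemj)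
      (Set.Ico_subset_Icc_self hmemj') hc
    exact ⟨radius_inj hn hi hi' hrr, angle_inj hj hj' hθ⟩
  · -- r = -r'
    exfalso
    have hrr : r = -r' := by linarith
    have hr' : r' ≠ 0 := by
      intro h0; rw [h0] at hrr; simp at hrr; exact hr hrr
    have hss : r' * (s + s') = 0 := by linear_combination s * hrr - h2
    have hs : s = -s' := by
      have := (mul_eq_zero.mp hss).resolve_left hr'
      linarith
    have hmemj := angle_arg_mem (n := n) hj
    have hmemj' := angle_arg_mem (n := n) hj'
    have hs0 : 0 ≤ s := Real.sin_nonneg_of_nonneg_of_le_pi hmemj.1 (le_of_lt hmemj.2)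
    have hs'0 : 0 ≤ s' := Real.sin_nonneg_of_nonneg_of_le_pi hmemj'.1 (le_of_lt hmemj'.2)
    have hs00 : s = 0 := by linarith
    have hs'00 : s' = 0 := by linarith
    -- then the angles are 0
    have hθ0 : (j:ℝ) * π / (n + 1) = 0 := by
      have := Real.sin_eq_zero_iff_of_lt_of_lt (x := (j:ℝ) * π / (n+1))
        (by linarith [hmemj.1, Real.pi_pos]) hmemj.2
      exact this.mp hs00
    have hθ'0 : (j':ℝ) * π / (n + 1) = 0 := by
      have := Real.sin_eq_zero_iff_of_lt_of_lt (x := (j':ℝ) * π / (n+1))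
        (by linarith [hmemj'.1, Real.pi_pos]) hmemj'.2
      exact this.mp hs'00
    have hc1 : c = 1 := by rw [show c = Real.cos ((j:ℝ)*π/(n+1)) from rfl, hθ0, Real.cos_zero]
    have hc'1 : c' = 1 := by rw [show c' = Real.cos ((j':ℝ)*π/(n+1)) from rfl, hθ'0, Real.cos_zero]
    rw [hc1, hc'1, mul_one, mul_one, hrr] at h1
    have : r' = 0 := by linarith
    rw [hrr, this] at hr; simp at hr

lemma ne_origin {n i j : ℕ} (hr : Real.cos ((i : ℝ) * π / n) ≠ 0) :
    (Real.cos ((i:ℝ) * π / n) * Real.cos ((j:ℝ) * π / (n + 1)),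
     Real.cos ((i:ℝ) * π / n) * Real.sin ((j:ℝ) * π / (n + 1))) ≠ ((0:ℝ), (0:ℝ)) := by
  intro h
  rw [Prod.mk.injEq] at h
  have hcs := Real.sin_sq_add_cos_sq ((j:ℝ) * π / (n + 1))
  have : Real.cos ((i:ℝ) * π / n) ^ 2 = 0 := by nlinarith [h.1, h.2]
  exact hr (by nlinarith [this])

end PolarGridAux

open PolarGridAux in
/-- For `n ≥ 1`, the polar symmetric grid of degree `n` has `(n+1)²` distinct points
when `n` is odd, and `n² + n + 1` distinct points when `n` is even. -/
theorem polarGrid_card (n : ℕ) (hn : 1 ≤ n) :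
    (Odd n → (polarGrid n).card = (n + 1) ^ 2) ∧
      (Even n → (polarGrid n).card = n ^ 2 + n + 1) := by
  constructor
  · intro hodd
    rw [polarGrid, Finset.card_image_of_injOn, Finset.card_product, Finset.card_range]
    · ring
    · rintro ⟨i, j⟩ hij ⟨i', j'⟩ hij' heq
      simp only [Finset.coe_product, Set.mem_prod, Finset.mem_coe, Finset.mem_range,
        Nat.lt_succ_iff] at hij hij'
      simp only [Prod.mk.injEq] at heq
      have hr : Real.cos ((i : ℝ) * π / n) ≠ 0 := by
        intro h0
        rw [radius_eq_zero_iff hn hij.1] at h0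
        rw [← h0] at hodd
        exact (Nat.not_odd_iff_even.mpr ⟨i, by ring⟩) hodd
      obtain ⟨h1, h2⟩ := key hn hij.1 hij.2 hij'.1 hij'.2 hr heq.1 heq.2
      exact Prod.ext h1 h2
  · intro heven
    obtain ⟨m, hm⟩ := heven
    have hmn : 2 * m = n := by omega
    have hmle : m ∈ Finset.range (n + 1) := Finset.mem_range.mpr (by omega)
    set f : ℕ × ℕ → ℝ × ℝ := fun ij =>
      (Real.cos (ij.1 * π / n) * Real.cos (ij.2 * π / (n + 1)),
        Real.cos (ij.1 * π / n) * Real.sin (ij.2 * π / (n + 1))) with hf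
    have hrm : Real.cos ((m : ℝ) * π / n) = 0 :=
      (radius_eq_zero_iff hn (by omega)).mpr hmn
    have hsplit : Finset.range (n + 1) = insert m ((Finset.range (n + 1)).erase m) :=
      (Finset.insert_erase hmle).symm
    have hprod : Finset.range (n + 1) ×ˢ Finset.range (n + 1)
        = ({m} ×ˢ Finset.range (n + 1)) ∪
          (((Finset.range (n + 1)).erase m) ×ˢ Finset.range (n + 1)) := by
      rw [hsplit]
      ext ⟨a, b⟩
      simp [Finset.mem_product, Finset.mem_insert, or_and_right]
      tauto
    rw [polarGrid, ← hf, hprod, Finset.image_union]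
    have himg0 : ({m} ×ˢ Finset.range (n + 1)).image f = {((0:ℝ), (0:ℝ))} := by
      apply Finset.eq_singleton_iff_unique_mem.mpr
      constructor
      · refine Finset.mem_image.mpr ⟨(m, 0), ?_, ?_⟩
        · simp
        · simp [hf, hrm]
      · intro x hx
        obtain ⟨⟨a, b⟩, hab, hx⟩ := Finset.mem_image.mp hx
        simp only [Finset.mem_product, Finset.mem_singleton] at hab
        rw [← hx, hf]
        simp [hab.1, hrm]
    rw [himg0]
    have hinj : Set.InjOn f ((((Finset.range (n + 1)).erase m) ×ˢ Finset.range (n + 1)) : Finset (ℕ × ℕ)) := by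
      rintro ⟨i, j⟩ hij ⟨i', j'⟩ hij' heq
      simp only [Finset.coe_product, Set.mem_prod, Finset.mem_coe, Finset.mem_erase,
        Finset.mem_range, Nat.lt_succ_iff] at hij hij'
      simp only [hf, Prod.mk.injEq] at heq
      have hr : Real.cos ((i : ℝ) * π / n) ≠ 0 := by
        intro h0
        rw [radius_eq_zero_iff hn hij.1.2] at h0
        omega
      obtain ⟨h1, h2⟩ := key hn hij.1.2 hij.2 hij'.1.2 hij'.2 hr heq.1 heq.2
      exact Prod.ext h1 h2
    have hdisj : Disjoint ({((0:ℝ),(0:ℝ))} : Finset (ℝ × ℝ))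
        ((((Finset.range (n + 1)).erase m) ×ˢ Finset.range (n + 1)).image f) := by
      rw [Finset.disjoint_singleton_left]
      intro hx
      obtain ⟨⟨a, b⟩, hab, hx⟩ := Finset.mem_image.mp hx
      simp only [Finset.mem_product, Finset.mem_erase, Finset.mem_range, Nat.lt_succ_iff] at hab
      have hr : Real.cos ((a : ℝ) * π / n) ≠ 0 := by
        intro h0
        rw [radius_eq_zero_iff hn hab.1.2] at h0
        omega
      exact ne_origin hr hx
    rw [Finset.card_union_of_disjoint hdisj, Finset.card_singleton,
      Finset.card_image_of_injOn hinj, Finset.card_product, Finset.card_range,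
      Finset.card_erase_of_mem hmle, Finset.card_range]
    have h1 : n + 1 - 1 = n := by omega
    rw [h1]
    ring
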